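/- Let H be a finite-dimensional complex inner product space of dimension n, let B = {e_1,...,e_n} be an orthogonal basis of H, and let A be the associated orthogonal apartment of the Grassmannian G_k(H), i.e. the set of all k-dimensional subspaces spanned by subsets of B. If X, Y ∈ A are distinct with dim(X ∩ Y) = m, then the number of unordered pairs {i,j} (i ≠ j) such that both X and Y belong to C_{ij} := A(+i,-j) ∪ A(+j,-i) equals (k-m)^2 + m(n-2k+m). Here A(+i,-j) denotes the set of elements of A containing e_i and not containing e_j. -/

import Mathlib

open Module Submodule

lemma aux_count {n : ℕ} (Sx Sy : Finset (Fin n)) :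
    {p : Finset (Fin n) | p.card = 2 ∧
        ∃ i ∈ p, ∃ j ∈ p, i ≠ j ∧
          ((i ∈ Sx ∧ j ∉ Sx) ∨ (j ∈ Sx ∧ i ∉ Sx)) ∧
          ((i ∈ Sy ∧ j ∉ Sy) ∨ (j ∈ Sy ∧ i ∉ Sy))}.ncard
      = (Sx \ Sy).card * (Sy \ Sx).card + (Sx ∩ Sy).card * ((Sx ∪ Sy)ᶜ).card := by
  classical
  set f : Fin n × Fin n → Finset (Fin n) := fun q => {q.1, q.2} with hf
  have hinj : ∀ (A B : Finset (Fin n)), Disjoint A B → Set.InjOn f ↑(A ×ˢ B) := by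
    rintro A B hAB ⟨a, b⟩ hab ⟨c, d⟩ hcd h
    simp only [Finset.coe_product, Set.mem_prod, Finset.mem_coe] at hab hcd
    simp only [hf] at h
    have hac : a = c := by
      have : a ∈ ({c, d} : Finset (Fin n)) := h ▸ Finset.mem_insert_self _ _
      rcases Finset.mem_insert.1 this with h1 | h1
      · exact h1
      · exact absurd (Finset.mem_singleton.1 h1 ▸ hab.1)
          (Finset.disjoint_right.1 hAB hcd.2)
    have hbd : b = d := by
      have : b ∈ ({c, d} : Finset (Fin n)) := h ▸ Finset.mem_insert_of_mem
        (Finset.mem_singleton_self _)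
      rcases Finset.mem_insert.1 this with h1 | h1
      · exact absurd (h1 ▸ hab.2) (Finset.disjoint_left.1 hAB hcd.1)
      · exact Finset.mem_singleton.1 h1
    exact Prod.ext hac hbd
  have hdisj1 : Disjoint (Sx \ Sy) (Sy \ Sx) := disjoint_sdiff_sdiff
  have hdisj2 : Disjoint (Sx ∩ Sy) ((Sx ∪ Sy)ᶜ) :=
    Disjoint.mono_left (Finset.inter_subset_left.trans Finset.subset_union_left)
      disjoint_compl_right
  have hset : {p : Finset (Fin n) | p.card = 2 ∧
        ∃ i ∈ p, ∃ j ∈ p, i ≠ j ∧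
          ((i ∈ Sx ∧ j ∉ Sx) ∨ (j ∈ Sx ∧ i ∉ Sx)) ∧
          ((i ∈ Sy ∧ j ∉ Sy) ∨ (j ∈ Sy ∧ i ∉ Sy))}
      = ↑(((Sx \ Sy) ×ˢ (Sy \ Sx)).image f ∪ ((Sx ∩ Sy) ×ˢ (Sx ∪ Sy)ᶜ).image f) := by
    ext p
    simp only [Set.mem_setOf_eq, Finset.coe_union, Set.mem_union, Finset.coe_image,
      Set.mem_image, Finset.mem_coe, Finset.mem_product]
    constructor
    · rintro ⟨hcard, i, hi, j, hj, hij, hXc, hYc⟩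
      have hp : p = {i, j} := by
        refine (Finset.eq_of_subset_of_card_le ?_ ?_).symm
        · intro x hx
          rcases Finset.mem_insert.1 hx with rfl | hx
          · exact hi
          · exact Finset.mem_singleton.1 hx ▸ hj
        · rw [hcard, Finset.card_pair hij]
      rcases hXc with ⟨hix, hjx⟩ | ⟨hjx, hix⟩ <;>
        rcases hYc with ⟨hiy, hjy⟩ | ⟨hjy, hiy⟩
      · exact Or.inr ⟨(i, j), ⟨Finset.mem_inter.2 ⟨hix, hiy⟩,
          Finset.mem_compl.2 (by simp [hjx, hjy])⟩, hp.symm⟩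
      · exact Or.inl ⟨(i, j), ⟨Finset.mem_sdiff.2 ⟨hix, hiy⟩,
          Finset.mem_sdiff.2 ⟨hjy, hjx⟩⟩, hp.symm⟩
      · exact Or.inl ⟨(j, i), ⟨Finset.mem_sdiff.2 ⟨hjx, hjy⟩,
          Finset.mem_sdiff.2 ⟨hiy, hix⟩⟩, by rw [hp, Finset.pair_comm]⟩
      · exact Or.inr ⟨(j, i), ⟨Finset.mem_inter.2 ⟨hjx, hjy⟩,
          Finset.mem_compl.2 (by simp [hix, hiy])⟩, by rw [hp, Finset.pair_comm]⟩
    · rintro (⟨⟨a, b⟩, ⟨ha, hb⟩, rfl⟩ | ⟨⟨a, b⟩, ⟨ha, hb⟩, rfl⟩)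
      · rw [Finset.mem_sdiff] at ha hb
        have hab : a ≠ b := fun h => hb.2 (h ▸ ha.1)
        exact ⟨Finset.card_pair hab, a, Finset.mem_insert_self _ _, b,
          Finset.mem_insert_of_mem (Finset.mem_singleton_self _), hab,
          Or.inl ⟨ha.1, hb.2⟩, Or.inr ⟨hb.1, ha.2⟩⟩
      · rw [Finset.mem_inter] at ha
        rw [Finset.mem_compl, Finset.mem_union] at hb
        push_neg at hb
        have hab : a ≠ b := fun h => hb.1 (h ▸ ha.1)
        exact ⟨Finset.card_pair hab, a, Finset.mem_insert_self _ _, b,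
          Finset.mem_insert_of_mem (Finset.mem_singleton_self _), hab,
          Or.inl ⟨ha.1, hb.1⟩, Or.inl ⟨ha.2, hb.2⟩⟩
  rw [hset, Set.ncard_coe_finset]
  have hdisjT : Disjoint (((Sx \ Sy) ×ˢ (Sy \ Sx)).image f)
      (((Sx ∩ Sy) ×ˢ (Sx ∪ Sy)ᶜ).image f) := by
    rw [Finset.disjoint_left]
    rintro p hp1 hp2
    simp only [Finset.mem_image, Finset.mem_product] at hp1 hp2
    obtain ⟨⟨a, b⟩, ⟨ha, hb⟩, rfl⟩ := hp1
    obtain ⟨⟨c, d⟩, ⟨hc, hd⟩, hcd⟩ := hp2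
    rw [Finset.mem_sdiff] at ha hb
    rw [Finset.mem_inter] at hc
    rw [Finset.mem_compl, Finset.mem_union] at hd
    push_neg at hd
    simp only [hf] at hcd
    have hcm : c ∈ ({a, b} : Finset (Fin n)) := hcd ▸ Finset.mem_insert_self _ _
    rcases Finset.mem_insert.1 hcm with rfl | h1
    · exact ha.2 hc.2
    · exact hb.2 (Finset.mem_singleton.1 h1 ▸ hc.1)
  rw [Finset.card_union_of_disjoint hdisjT,
    Finset.card_image_of_injOn (hinj _ _ hdisj1),
    Finset.card_image_of_injOn (hinj _ _ hdisj2),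
    Finset.card_product, Finset.card_product]

theorem stmt_6 {H : Type*} [NormedAddCommGroup H] [InnerProductSpace ℂ H]
    (n k m : ℕ) (hn : finrank ℂ H = n) (hk1 : 1 < k) (hk2 : k < n - 1)
    (e : Fin n → H) (he0 : ∀ i, e i ≠ 0)
    (he : ∀ i j, i ≠ j → inner ℂ (e i) (e j) = (0 : ℂ))
    (hspan : Submodule.span ℂ (Set.range e) = ⊤)
    (Sx Sy : Finset (Fin n)) (hSx : Sx.card = k) (hSy : Sy.card = k)
    (X Y : Submodule ℂ H)
    (hX : X = Submodule.span ℂ (e '' Sx)) (hY : Y = Submodule.span ℂ (e '' Sy))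
    (hXY : X ≠ Y) (hm : finrank ℂ ↥(X ⊓ Y) = m) :
    ({p : Finset (Fin n) | p.card = 2 ∧
        ∃ i ∈ p, ∃ j ∈ p, i ≠ j ∧
          ((e i ∈ X ∧ e j ∉ X) ∨ (e j ∈ X ∧ e i ∉ X)) ∧
          ((e i ∈ Y ∧ e j ∉ Y) ∨ (e j ∈ Y ∧ e i ∉ Y))}.ncard : ℤ) =
      ((k : ℤ) - m) ^ 2 + m * ((n : ℤ) - 2 * k + m) := by
  classical
  have hli : LinearIndependent ℂ e :=
    linearIndependent_of_ne_zero_of_inner_eq_zero he0 (fun i j hij => he i j hij)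
  let b : Basis (Fin n) ℂ H := Basis.mk hli hspan.ge
  have hbe : ⇑b = e := Basis.coe_mk _ _
  have hmemX : ∀ i, e i ∈ X ↔ i ∈ Sx := by
    intro i
    rw [hX, ← hbe]
    simpa using b.self_mem_span_image (i := i) (s := ↑Sx)
  have hmemY : ∀ i, e i ∈ Y ↔ i ∈ Sy := by
    intro i
    rw [hY, ← hbe]
    simpa using b.self_mem_span_image (i := i) (s := ↑Sy)
  -- intersection
  have hinter : X ⊓ Y = Submodule.span ℂ (e '' ↑(Sx ∩ Sy)) := by
    ext x
    rw [Submodule.mem_inf, hX, hY, ← hbe, Basis.mem_span_image, Basis.mem_span_image,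
      Basis.mem_span_image, Finset.coe_inter, Set.subset_inter_iff]
  have hcardm : (Sx ∩ Sy).card = m := by
    rw [← hm, hinter]
    have hli' : LinearIndependent ℂ (e ∘ ((↑) : ↥(Sx ∩ Sy) → Fin n)) :=
      hli.comp _ Subtype.val_injective
    have hr : Set.range (e ∘ ((↑) : ↥(Sx ∩ Sy) → Fin n)) = e '' ↑(Sx ∩ Sy) := by
      rw [Set.range_comp]; congr 1; ext x; simp
    rw [← hr, finrank_span_eq_card hli', Fintype.card_coe]
  have hsimp : {p : Finset (Fin n) | p.card = 2 ∧
        ∃ i ∈ p, ∃ j ∈ p, i ≠ j ∧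
          ((e i ∈ X ∧ e j ∉ X) ∨ (e j ∈ X ∧ e i ∉ X)) ∧
          ((e i ∈ Y ∧ e j ∉ Y) ∨ (e j ∈ Y ∧ e i ∉ Y))}
      = {p : Finset (Fin n) | p.card = 2 ∧
        ∃ i ∈ p, ∃ j ∈ p, i ≠ j ∧
          ((i ∈ Sx ∧ j ∉ Sx) ∨ (j ∈ Sx ∧ i ∉ Sx)) ∧
          ((i ∈ Sy ∧ j ∉ Sy) ∨ (j ∈ Sy ∧ i ∉ Sy))} := by
    ext p
    simp only [Set.mem_setOf_eq, hmemX, hmemY]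
  rw [hsimp, aux_count Sx Sy]
  have h1 : (Sx \ Sy).card + (Sx ∩ Sy).card = Sx.card := Finset.card_sdiff_add_card_inter _ _
  have h2 : (Sy \ Sx).card + (Sy ∩ Sx).card = Sy.card := Finset.card_sdiff_add_card_inter _ _
  rw [Finset.inter_comm] at h2
  have h3 : (Sx ∪ Sy).card + (Sx ∩ Sy).card = Sx.card + Sy.card :=
    Finset.card_union_add_card_inter _ _
  have h4 : (Sx ∪ Sy).card + ((Sx ∪ Sy)ᶜ).card = Fintype.card (Fin n) :=
    Finset.card_add_card_compl _
  rw [Fintype.card_fin] at h4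
  have ha : ((Sx \ Sy).card : ℤ) = (k : ℤ) - m := by omega
  have hb' : ((Sy \ Sx).card : ℤ) = (k : ℤ) - m := by omega
  have hc : (((Sx ∪ Sy)ᶜ).card : ℤ) = (n : ℤ) - 2 * k + m := by omega
  push_cast
  rw [ha, hb', hc, hcardm]
  ring
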